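/- Let f(t,u,v) := e^{t(u+v)}, h1[u] := u(1/4) + (u'(3/4))², h2[u] := ∫₀¹ (u(s)³ + u'(s)) ds, and suppose λ, η1, η2 ≥ 0 satisfy max{ λ·e²/2 + 2η1 + 2η2, λ·e² + 2η2 } ≤ 1 and λ ≥ 1/10. Then the boundary value problem u''(t) + λ e^{t(u(t)+u'(t))} = 0, u(0) = η1 h1[u], u'(1) = η2 h2[u] has at least one solution u that is non-negative and non-decreasing on [0,1] and satisfies 1/20 ≤ ‖u‖ ≤ 1, where ‖u‖ := max{‖u‖_∞, ‖u'‖_∞}. In particular this holds for λ = 1/10, η1 = 1/11, η2 = 1/12. -/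

import Mathlib

open MeasureTheory Set Bornology
open Filter Topology intervalIntegral

noncomputable section

/-- The interval `[0,1]`. -/
abbrev I01 : Set ℝ := Set.Icc 0 1

/-- The space `C[0,1] × C[0,1]`; an element of `C¹[0,1]` is encoded as the pair `(u, u')`.
The product norm is exactly `‖(u,u')‖ = max {‖u‖_∞, ‖u'‖_∞}`. -/
abbrev E := C(I01, ℝ) × C(I01, ℝ)

/-- The extension to `ℝ` of a continuous function on `[0,1]` (constant outside `[0,1]`). -/
def ext01 (g : C(I01, ℝ)) : ℝ → ℝ := Set.IccExtend zero_le_one ⇑g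

/-- `p = (u, u')` encodes a `C¹` function: `u'` is the derivative of `u` on `[0,1]`. -/
def IsC1 (p : E) : Prop :=
  ∀ t : I01, HasDerivWithinAt (ext01 p.1) (p.2 t) I01 (t : ℝ)

/-- The cone `P` of non-negative `C¹[0,1]` functions with non-negative derivative. -/
def coneP : Set E :=
  {p | IsC1 p ∧ ∀ t : I01, 0 ≤ p.1 t ∧ 0 ≤ p.2 t}

namespace Ex31

/-- nonlinearity composed with (u,v) -/
def gf (u v : ℝ → ℝ) : ℝ → ℝ := fun s => Real.exp (s * (u s + v s))

def Hf (u v : ℝ → ℝ) : ℝ := ∫ s in (0:ℝ)..1, ((u s)^3 + v s)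

def stepU (η₁ η₂ lam : ℝ) (u v : ℝ → ℝ) : ℝ → ℝ := fun t =>
  η₁ * (u (1/4) + (v (3/4))^2) + η₂ * Hf u v * t
    + lam * ((∫ s in (0:ℝ)..t, s * gf u v s) + t * ∫ s in t..(1:ℝ), gf u v s)

def stepV (η₂ lam : ℝ) (u v : ℝ → ℝ) : ℝ → ℝ := fun t =>
  η₂ * Hf u v + lam * ∫ s in t..(1:ℝ), gf u v s

def it (η₁ η₂ lam : ℝ) : ℕ → (ℝ → ℝ) × (ℝ → ℝ)
  | 0 => (fun _ => 0, fun _ => 0)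
  | n+1 => (stepU η₁ η₂ lam (it η₁ η₂ lam n).1 (it η₁ η₂ lam n).2,
            stepV η₂ lam (it η₁ η₂ lam n).1 (it η₁ η₂ lam n).2)

def Ok (u v : ℝ → ℝ) : Prop :=
  Continuous u ∧ Continuous v ∧
    ∀ t ∈ Set.Icc (0:ℝ) 1, (0 ≤ u t ∧ u t ≤ 1) ∧ (0 ≤ v t ∧ v t ≤ 1)

lemma gf_cont {u v : ℝ → ℝ} (hu : Continuous u) (hv : Continuous v) :
    Continuous (gf u v) :=
  Real.continuous_exp.comp (continuous_id.mul (hu.add hv))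

lemma gf_nonneg (u v : ℝ → ℝ) (s : ℝ) : 0 ≤ gf u v s := (Real.exp_pos _).le

lemma gf_le' {u v : ℝ → ℝ}
    (h : ∀ t ∈ Set.Icc (0:ℝ) 1, (0 ≤ u t ∧ u t ≤ 1) ∧ (0 ≤ v t ∧ v t ≤ 1))
    {s : ℝ} (hs : s ∈ Set.Icc (0:ℝ) 1) :
    gf u v s ≤ Real.exp 2 := by
  obtain ⟨h1, h2⟩ := h s hs
  apply Real.exp_le_exp.2
  nlinarith [hs.1, hs.2]

lemma gf_le {u v : ℝ → ℝ} (h : Ok u v) {s : ℝ} (hs : s ∈ Set.Icc (0:ℝ) 1) :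
    gf u v s ≤ Real.exp 2 := gf_le' h.2.2 hs

lemma gf_ge_one {u v : ℝ → ℝ} (h : ∀ t ∈ Set.Icc (0:ℝ) 1, 0 ≤ u t ∧ 0 ≤ v t)
    {s : ℝ} (hs : s ∈ Set.Icc (0:ℝ) 1) : 1 ≤ gf u v s := by
  obtain ⟨h1, h2⟩ := h s hs
  have h0 : 0 ≤ s * (u s + v s) := mul_nonneg hs.1 (by linarith)
  have := Real.exp_le_exp.2 h0
  rwa [Real.exp_zero] at this

lemma Hf_nonneg {u v : ℝ → ℝ} (h : ∀ t ∈ Set.Icc (0:ℝ) 1, 0 ≤ u t ∧ 0 ≤ v t) :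
    0 ≤ Hf u v := by
  apply intervalIntegral.integral_nonneg (by norm_num)
  intro s hs
  obtain ⟨h1, h2⟩ := h s hs
  positivity

lemma Hf_le_two {u v : ℝ → ℝ} (h : Ok u v) : Hf u v ≤ 2 := by
  have : Hf u v ≤ ∫ _ in (0:ℝ)..1, (2:ℝ) := by
    apply intervalIntegral.integral_mono_on (by norm_num)
    · exact (((h.1.pow 3).add h.2.1)).intervalIntegrable 0 1
    · exact intervalIntegrable_const
    · intro s hs
      obtain ⟨⟨h1, h2⟩, ⟨h3, h4⟩⟩ := h.2.2 s hs
      have : (u s)^3 ≤ 1 := pow_le_one₀ h1 h2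
      linarith
  simpa using this

lemma I1_nonneg {u v : ℝ → ℝ} {t : ℝ} (ht : 0 ≤ t) :
    0 ≤ ∫ s in (0:ℝ)..t, s * gf u v s := by
  apply intervalIntegral.integral_nonneg ht
  intro s hs
  exact mul_nonneg hs.1 (gf_nonneg u v s)

lemma I1_le {u v : ℝ → ℝ} (h : Ok u v) {t : ℝ} (ht : t ∈ Set.Icc (0:ℝ) 1) :
    (∫ s in (0:ℝ)..t, s * gf u v s) ≤ t^2/2 * Real.exp 2 := by
  have h1 : (∫ s in (0:ℝ)..t, s * gf u v s) ≤ ∫ s in (0:ℝ)..t, s * Real.exp 2 := by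
    apply intervalIntegral.integral_mono_on ht.1
    · exact (continuous_id.mul (gf_cont h.1 h.2.1)).intervalIntegrable 0 t
    · exact (continuous_id.mul continuous_const).intervalIntegrable 0 t
    · intro s hs
      exact mul_le_mul_of_nonneg_left
        (gf_le h ⟨hs.1, hs.2.trans ht.2⟩) hs.1
  have h2 : (∫ s in (0:ℝ)..t, s * Real.exp 2) = t^2/2 * Real.exp 2 := by
    rw [intervalIntegral.integral_mul_const, integral_id]
    ring
  linarith

lemma I2_nonneg {u v : ℝ → ℝ} {t : ℝ} (ht : t ≤ 1) :
    0 ≤ ∫ s in t..(1:ℝ), gf u v s := by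
  apply intervalIntegral.integral_nonneg ht
  intro s _
  exact gf_nonneg u v s

lemma I2_le {u v : ℝ → ℝ} (h : Ok u v) {t : ℝ} (ht : t ∈ Set.Icc (0:ℝ) 1) :
    (∫ s in t..(1:ℝ), gf u v s) ≤ (1-t) * Real.exp 2 := by
  have h1 : (∫ s in t..(1:ℝ), gf u v s) ≤ ∫ _ in t..(1:ℝ), Real.exp 2 := by
    apply intervalIntegral.integral_mono_on ht.2
    · exact (gf_cont h.1 h.2.1).intervalIntegrable t 1
    · exact intervalIntegrable_const
    · intro s hs
      exact gf_le h ⟨le_trans ht.1 hs.1, hs.2⟩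
  simpa using h1

lemma int_right_eq {g : ℝ → ℝ} (h1 : IntervalIntegrable g volume 0 t)
    (h2 : IntervalIntegrable g volume t 1) :
    (∫ s in t..(1:ℝ), g s) = (∫ s in (0:ℝ)..1, g s) - ∫ s in (0:ℝ)..t, g s := by
  have := intervalIntegral.integral_add_adjacent_intervals h1 h2
  linarith

lemma ok_step {η₁ η₂ lam : ℝ} (hη₁ : 0 ≤ η₁) (hη₂ : 0 ≤ η₂) (hlam : 0 ≤ lam)
    (hA : 2*η₁ + 2*η₂ + lam * (Real.exp 2/2) ≤ 1)
    (hB : 2*η₂ + lam * Real.exp 2 ≤ 1)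
    {u v : ℝ → ℝ} (h : Ok u v) :
    Ok (stepU η₁ η₂ lam u v) (stepV η₂ lam u v) := by
  have hgc : Continuous (gf u v) := gf_cont h.1 h.2.1
  have hii : ∀ a b : ℝ, IntervalIntegrable (gf u v) volume a b :=
    fun a b => hgc.intervalIntegrable a b
  have hIcont : Continuous fun t => ∫ s in (0:ℝ)..t, gf u v s :=
    intervalIntegral.continuous_primitive (fun a b => hii a b) 0
  have hI2eq : ∀ t : ℝ, (∫ s in t..(1:ℝ), gf u v s)
      = (∫ s in (0:ℝ)..1, gf u v s) - ∫ s in (0:ℝ)..t, gf u v s :=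
    fun t => int_right_eq (hii 0 t) (hii t 1)
  have hI2cont : Continuous fun t => ∫ s in t..(1:ℝ), gf u v s := by
    have : (fun t => ∫ s in t..(1:ℝ), gf u v s)
        = fun t => (∫ s in (0:ℝ)..1, gf u v s) - ∫ s in (0:ℝ)..t, gf u v s :=
      funext hI2eq
    rw [this]
    exact continuous_const.sub hIcont
  have hI1cont : Continuous fun t => ∫ s in (0:ℝ)..t, s * gf u v s :=
    intervalIntegral.continuous_primitive
      (fun a b => (continuous_id.mul hgc).intervalIntegrable a b) 0
  have he2 : (0:ℝ) < Real.exp 2 := Real.exp_pos 2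
  refine ⟨?_, ?_, ?_⟩
  · unfold stepU
    exact (continuous_const.add (continuous_const.mul continuous_id)).add
      (continuous_const.mul (hI1cont.add (continuous_id.mul hI2cont)))
  · unfold stepV
    exact continuous_const.add (continuous_const.mul hI2cont)
  · intro t ht
    have hHf0 : 0 ≤ Hf u v := Hf_nonneg (fun s hs => ⟨(h.2.2 s hs).1.1, (h.2.2 s hs).2.1⟩)
    have hHf2 : Hf u v ≤ 2 := Hf_le_two h
    have hI10 : 0 ≤ ∫ s in (0:ℝ)..t, s * gf u v s := I1_nonneg ht.1
    have hI1t : (∫ s in (0:ℝ)..t, s * gf u v s) ≤ t^2/2 * Real.exp 2 := I1_le h ht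
    have hI20 : 0 ≤ ∫ s in t..(1:ℝ), gf u v s := I2_nonneg ht.2
    have hI2t : (∫ s in t..(1:ℝ), gf u v s) ≤ (1-t) * Real.exp 2 := I2_le h ht
    have hu14 := h.2.2 (1/4) (by norm_num)
    have hv34 := h.2.2 (3/4) (by norm_num)
    constructor
    · constructor
      · unfold stepU
        have : 0 ≤ u (1/4) + (v (3/4))^2 := by nlinarith [hu14.1.1, sq_nonneg (v (3/4))]
        have ht2 : 0 ≤ t * ∫ s in t..(1:ℝ), gf u v s := mul_nonneg ht.1 hI20
        have := mul_nonneg (mul_nonneg hη₂ hHf0) ht.1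
        nlinarith
      · unfold stepU
        have hh1 : u (1/4) + (v (3/4))^2 ≤ 2 := by
          nlinarith [hu14.1.2, hv34.2.1, hv34.2.2]
        have e1 : η₁ * (u (1/4) + (v (3/4))^2) ≤ 2 * η₁ := by nlinarith
        have e2 : η₂ * Hf u v * t ≤ 2 * η₂ := by
          have k1 : η₂ * Hf u v * t ≤ η₂ * Hf u v * 1 :=
            mul_le_mul_of_nonneg_left ht.2 (mul_nonneg hη₂ hHf0)
          have k2 : η₂ * Hf u v ≤ η₂ * 2 := mul_le_mul_of_nonneg_left hHf2 hη₂
          linarith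
        have e3 : (∫ s in (0:ℝ)..t, s * gf u v s) + t * (∫ s in t..(1:ℝ), gf u v s)
            ≤ Real.exp 2 / 2 := by
          have h4 : t * (∫ s in t..(1:ℝ), gf u v s) ≤ t * ((1-t) * Real.exp 2) :=
            mul_le_mul_of_nonneg_left hI2t ht.1
          nlinarith [ht.1, ht.2, sq_nonneg (t-1)]
        have e4 : lam * ((∫ s in (0:ℝ)..t, s * gf u v s)
            + t * ∫ s in t..(1:ℝ), gf u v s) ≤ lam * (Real.exp 2/2) :=
          mul_le_mul_of_nonneg_left e3 hlam
        linarith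
    · constructor
      · unfold stepV
        have := mul_nonneg hη₂ hHf0
        have := mul_nonneg hlam hI20
        linarith
      · have hle : (∫ s in t..(1:ℝ), gf u v s) ≤ Real.exp 2 := by
          have : (1-t) * Real.exp 2 ≤ 1 * Real.exp 2 :=
            mul_le_mul_of_nonneg_right (by linarith [ht.1]) he2.le
          rw [one_mul] at this
          linarith
        have e2 : lam * (∫ s in t..(1:ℝ), gf u v s) ≤ lam * Real.exp 2 :=
          mul_le_mul_of_nonneg_left hle hlam
        have e1 : η₂ * Hf u v ≤ η₂ * 2 := mul_le_mul_of_nonneg_left hHf2 hη₂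
        unfold stepV
        linarith


lemma mono_step {η₁ η₂ lam : ℝ} (hη₁ : 0 ≤ η₁) (hη₂ : 0 ≤ η₂) (hlam : 0 ≤ lam)
    {u1 v1 u2 v2 : ℝ → ℝ} (h1 : Ok u1 v1) (h2 : Ok u2 v2)
    (hle : ∀ t ∈ Set.Icc (0:ℝ) 1, u1 t ≤ u2 t ∧ v1 t ≤ v2 t) :
    ∀ t ∈ Set.Icc (0:ℝ) 1, stepU η₁ η₂ lam u1 v1 t ≤ stepU η₁ η₂ lam u2 v2 t ∧
      stepV η₂ lam u1 v1 t ≤ stepV η₂ lam u2 v2 t := by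
  have hg : ∀ s ∈ Set.Icc (0:ℝ) 1, gf u1 v1 s ≤ gf u2 v2 s := by
    intro s hs
    apply Real.exp_le_exp.2
    exact mul_le_mul_of_nonneg_left (add_le_add (hle s hs).1 (hle s hs).2) hs.1
  have hH : Hf u1 v1 ≤ Hf u2 v2 := by
    apply intervalIntegral.integral_mono_on (by norm_num)
    · exact ((h1.1.pow 3).add h1.2.1).intervalIntegrable 0 1
    · exact ((h2.1.pow 3).add h2.2.1).intervalIntegrable 0 1
    · intro s hs
      have := pow_le_pow_left₀ ((h1.2.2 s hs).1.1) (hle s hs).1 3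
      linarith [(hle s hs).2]
  intro t ht
  have hI2 : (∫ s in t..(1:ℝ), gf u1 v1 s) ≤ ∫ s in t..(1:ℝ), gf u2 v2 s := by
    apply intervalIntegral.integral_mono_on ht.2
    · exact (gf_cont h1.1 h1.2.1).intervalIntegrable t 1
    · exact (gf_cont h2.1 h2.2.1).intervalIntegrable t 1
    · exact fun s hs => hg s ⟨ht.1.trans hs.1, hs.2⟩
  have hI1 : (∫ s in (0:ℝ)..t, s * gf u1 v1 s) ≤ ∫ s in (0:ℝ)..t, s * gf u2 v2 s := by
    apply intervalIntegral.integral_mono_on ht.1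
    · exact (continuous_id.mul (gf_cont h1.1 h1.2.1)).intervalIntegrable 0 t
    · exact (continuous_id.mul (gf_cont h2.1 h2.2.1)).intervalIntegrable 0 t
    · intro s hs
      exact mul_le_mul_of_nonneg_left (hg s ⟨hs.1, hs.2.trans ht.2⟩) hs.1
  constructor
  · unfold stepU
    have e1 : η₁ * (u1 (1/4) + (v1 (3/4))^2) ≤ η₁ * (u2 (1/4) + (v2 (3/4))^2) := by
      apply mul_le_mul_of_nonneg_left _ hη₁
      have := pow_le_pow_left₀ ((h1.2.2 (3/4) (by norm_num)).2.1)
        ((hle (3/4) (by norm_num)).2) 2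
      linarith [(hle (1/4) (by norm_num)).1]
    have e2 : η₂ * Hf u1 v1 * t ≤ η₂ * Hf u2 v2 * t :=
      mul_le_mul_of_nonneg_right (mul_le_mul_of_nonneg_left hH hη₂) ht.1
    have e3 : t * (∫ s in t..(1:ℝ), gf u1 v1 s) ≤ t * ∫ s in t..(1:ℝ), gf u2 v2 s :=
      mul_le_mul_of_nonneg_left hI2 ht.1
    have e4 := mul_le_mul_of_nonneg_left (add_le_add hI1 e3) hlam
    linarith
  · unfold stepV
    have e1 : η₂ * Hf u1 v1 ≤ η₂ * Hf u2 v2 := mul_le_mul_of_nonneg_left hH hη₂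
    have e2 := mul_le_mul_of_nonneg_left hI2 hlam
    linarith

section Iter

variable {η₁ η₂ lam : ℝ}

variable (hη₁ : 0 ≤ η₁) (hη₂ : 0 ≤ η₂) (hlam : 0 ≤ lam)
  (hA : 2*η₁ + 2*η₂ + lam * (Real.exp 2/2) ≤ 1)
  (hB : 2*η₂ + lam * Real.exp 2 ≤ 1)

include hη₁ hη₂ hlam hA hB

lemma ok_it : ∀ n, Ok (it η₁ η₂ lam n).1 (it η₁ η₂ lam n).2
  | 0 => ⟨continuous_const, continuous_const, fun t _ => by norm_num [it]⟩
  | n+1 => ok_step hη₁ hη₂ hlam hA hB (ok_it n)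

lemma it_succ_le : ∀ n, ∀ t ∈ Set.Icc (0:ℝ) 1,
    (it η₁ η₂ lam n).1 t ≤ (it η₁ η₂ lam (n+1)).1 t ∧
    (it η₁ η₂ lam n).2 t ≤ (it η₁ η₂ lam (n+1)).2 t
  | 0 => by
    intro t ht
    have h := (ok_it hη₁ hη₂ hlam hA hB 1).2.2 t ht
    exact ⟨h.1.1, h.2.1⟩
  | n+1 => by
    intro t ht
    exact mono_step hη₁ hη₂ hlam (ok_it hη₁ hη₂ hlam hA hB n)
      (ok_it hη₁ hη₂ hlam hA hB (n+1)) (it_succ_le n) t ht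

lemma mono_it1 {t : ℝ} (ht : t ∈ Set.Icc (0:ℝ) 1) :
    Monotone fun n => (it η₁ η₂ lam n).1 t :=
  monotone_nat_of_le_succ fun n => (it_succ_le hη₁ hη₂ hlam hA hB n t ht).1

lemma mono_it2 {t : ℝ} (ht : t ∈ Set.Icc (0:ℝ) 1) :
    Monotone fun n => (it η₁ η₂ lam n).2 t :=
  monotone_nat_of_le_succ fun n => (it_succ_le hη₁ hη₂ hlam hA hB n t ht).2

lemma bdd_it1 {t : ℝ} (ht : t ∈ Set.Icc (0:ℝ) 1) :
    BddAbove (Set.range fun n => (it η₁ η₂ lam n).1 t) := by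
  refine ⟨1, ?_⟩
  rintro x ⟨n, rfl⟩
  exact ((ok_it hη₁ hη₂ hlam hA hB n).2.2 t ht).1.2

lemma bdd_it2 {t : ℝ} (ht : t ∈ Set.Icc (0:ℝ) 1) :
    BddAbove (Set.range fun n => (it η₁ η₂ lam n).2 t) := by
  refine ⟨1, ?_⟩
  rintro x ⟨n, rfl⟩
  exact ((ok_it hη₁ hη₂ hlam hA hB n).2.2 t ht).2.2

end Iter

def w1 (η₁ η₂ lam : ℝ) : ℝ → ℝ := fun t => ⨆ n, (it η₁ η₂ lam n).1 t
def w2 (η₁ η₂ lam : ℝ) : ℝ → ℝ := fun t => ⨆ n, (it η₁ η₂ lam n).2 t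

section Lim

variable {η₁ η₂ lam : ℝ}

variable (hη₁ : 0 ≤ η₁) (hη₂ : 0 ≤ η₂) (hlam : 0 ≤ lam)
  (hA : 2*η₁ + 2*η₂ + lam * (Real.exp 2/2) ≤ 1)
  (hB : 2*η₂ + lam * Real.exp 2 ≤ 1)

include hη₁ hη₂ hlam hA hB

lemma tendsto_w1 {t : ℝ} (ht : t ∈ Set.Icc (0:ℝ) 1) :
    Tendsto (fun n => (it η₁ η₂ lam n).1 t) atTop (𝓝 (w1 η₁ η₂ lam t)) :=
  tendsto_atTop_ciSup (mono_it1 hη₁ hη₂ hlam hA hB ht) (bdd_it1 hη₁ hη₂ hlam hA hB ht)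

lemma tendsto_w2 {t : ℝ} (ht : t ∈ Set.Icc (0:ℝ) 1) :
    Tendsto (fun n => (it η₁ η₂ lam n).2 t) atTop (𝓝 (w2 η₁ η₂ lam t)) :=
  tendsto_atTop_ciSup (mono_it2 hη₁ hη₂ hlam hA hB ht) (bdd_it2 hη₁ hη₂ hlam hA hB ht)

lemma w1_mem {t : ℝ} (ht : t ∈ Set.Icc (0:ℝ) 1) :
    0 ≤ w1 η₁ η₂ lam t ∧ w1 η₁ η₂ lam t ≤ 1 := by
  constructor
  · have := le_ciSup (bdd_it1 hη₁ hη₂ hlam hA hB ht) 0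
    simpa [it, w1] using this
  · exact ciSup_le fun n => ((ok_it hη₁ hη₂ hlam hA hB n).2.2 t ht).1.2

lemma w2_mem {t : ℝ} (ht : t ∈ Set.Icc (0:ℝ) 1) :
    0 ≤ w2 η₁ η₂ lam t ∧ w2 η₁ η₂ lam t ≤ 1 := by
  constructor
  · have := le_ciSup (bdd_it2 hη₁ hη₂ hlam hA hB ht) 0
    simpa [it, w2] using this
  · exact ciSup_le fun n => ((ok_it hη₁ hη₂ hlam hA hB n).2.2 t ht).2.2

end Lim

lemma w1_measurable (η₁ η₂ lam : ℝ) (hc : ∀ n, Continuous (it η₁ η₂ lam n).1) :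
    Measurable (w1 η₁ η₂ lam) :=
  Measurable.iSup fun n => (hc n).measurable

lemma w2_measurable (η₁ η₂ lam : ℝ) (hc : ∀ n, Continuous (it η₁ η₂ lam n).2) :
    Measurable (w2 η₁ η₂ lam) :=
  Measurable.iSup fun n => (hc n).measurable

/-- Dominated convergence for interval integrals of continuous functions. -/
lemma tendsto_int {C : ℝ} {F : ℕ → ℝ → ℝ} {f : ℝ → ℝ} {a b : ℝ} (hab : a ≤ b)
    (hFc : ∀ n, Continuous (F n))
    (hbd : ∀ n, ∀ s ∈ Set.Icc a b, |F n s| ≤ C)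
    (hlim : ∀ s ∈ Set.Icc a b, Tendsto (fun n => F n s) atTop (𝓝 (f s))) :
    Tendsto (fun n => ∫ s in a..b, F n s) atTop (𝓝 (∫ s in a..b, f s)) := by
  simp only [intervalIntegral.integral_of_le hab]
  apply MeasureTheory.tendsto_integral_of_dominated_convergence (fun _ => C)
  · exact fun n => ((hFc n).aestronglyMeasurable).restrict
  · exact integrableOn_const measure_Ioc_lt_top.ne
  · intro n
    filter_upwards [ae_restrict_mem measurableSet_Ioc] with s hs
    rw [Real.norm_eq_abs]
    exact hbd n s (Ioc_subset_Icc_self hs)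
  · filter_upwards [ae_restrict_mem measurableSet_Ioc] with s hs
    exact hlim s (Ioc_subset_Icc_self hs)


section Key

variable {η₁ η₂ lam : ℝ}

variable (hη₁ : 0 ≤ η₁) (hη₂ : 0 ≤ η₂) (hlam : 0 ≤ lam)
  (hA : 2*η₁ + 2*η₂ + lam * (Real.exp 2/2) ≤ 1)
  (hB : 2*η₂ + lam * Real.exp 2 ≤ 1)

include hη₁ hη₂ hlam hA hB

lemma w_eq : ∀ t ∈ Set.Icc (0:ℝ) 1,
    w1 η₁ η₂ lam t = stepU η₁ η₂ lam (w1 η₁ η₂ lam) (w2 η₁ η₂ lam) t ∧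
    w2 η₁ η₂ lam t = stepV η₂ lam (w1 η₁ η₂ lam) (w2 η₁ η₂ lam) t := by
  intro t ht
  have hok := ok_it hη₁ hη₂ hlam hA hB
  have tw1 : ∀ s ∈ Set.Icc (0:ℝ) 1,
      Tendsto (fun n => (it η₁ η₂ lam n).1 s) atTop (𝓝 (w1 η₁ η₂ lam s)) :=
    fun s hs => tendsto_w1 hη₁ hη₂ hlam hA hB hs
  have tw2 : ∀ s ∈ Set.Icc (0:ℝ) 1,
      Tendsto (fun n => (it η₁ η₂ lam n).2 s) atTop (𝓝 (w2 η₁ η₂ lam s)) :=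
    fun s hs => tendsto_w2 hη₁ hη₂ hlam hA hB hs
  have hA14 := tw1 (1/4) (by norm_num)
  have hB34 := tw2 (3/4) (by norm_num)
  have hH : Tendsto (fun n => Hf (it η₁ η₂ lam n).1 (it η₁ η₂ lam n).2) atTop
      (𝓝 (Hf (w1 η₁ η₂ lam) (w2 η₁ η₂ lam))) := by
    unfold Hf
    apply tendsto_int zero_le_one (C := 2)
    · exact fun n => ((hok n).1.pow 3).add (hok n).2.1
    · intro n s hs
      obtain ⟨⟨a1, a2⟩, b1, b2⟩ := (hok n).2.2 s hs
      have h3 : ((it η₁ η₂ lam n).1 s)^3 ≤ 1 := pow_le_one₀ a1 a2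
      have h30 : (0:ℝ) ≤ ((it η₁ η₂ lam n).1 s)^3 := by positivity
      rw [abs_le]
      constructor <;> linarith
    · exact fun s hs => ((tw1 s hs).pow 3).add (tw2 s hs)
  have glim : ∀ s ∈ Set.Icc (0:ℝ) 1,
      Tendsto (fun n => gf (it η₁ η₂ lam n).1 (it η₁ η₂ lam n).2 s) atTop
        (𝓝 (gf (w1 η₁ η₂ lam) (w2 η₁ η₂ lam) s)) := by
    intro s hs
    unfold gf
    exact (Real.continuous_exp.tendsto _).comp
      (Tendsto.const_mul s ((tw1 s hs).add (tw2 s hs)))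
  have hI1 : Tendsto (fun n => ∫ s in (0:ℝ)..t, s * gf (it η₁ η₂ lam n).1 (it η₁ η₂ lam n).2 s)
      atTop (𝓝 (∫ s in (0:ℝ)..t, s * gf (w1 η₁ η₂ lam) (w2 η₁ η₂ lam) s)) := by
    apply tendsto_int ht.1 (C := Real.exp 2)
    · exact fun n => continuous_id.mul (gf_cont (hok n).1 (hok n).2.1)
    · intro n s hs
      have hs' : s ∈ Set.Icc (0:ℝ) 1 := ⟨hs.1, hs.2.trans ht.2⟩
      rw [abs_of_nonneg (mul_nonneg hs.1 (gf_nonneg _ _ _))]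
      calc s * gf (it η₁ η₂ lam n).1 (it η₁ η₂ lam n).2 s
          ≤ 1 * Real.exp 2 :=
            mul_le_mul hs'.2 (gf_le (hok n) hs') (gf_nonneg _ _ _) zero_le_one
        _ = Real.exp 2 := one_mul _
    · exact fun s hs => Tendsto.const_mul s (glim s ⟨hs.1, hs.2.trans ht.2⟩)
  have hI2 : Tendsto (fun n => ∫ s in t..(1:ℝ), gf (it η₁ η₂ lam n).1 (it η₁ η₂ lam n).2 s)
      atTop (𝓝 (∫ s in t..(1:ℝ), gf (w1 η₁ η₂ lam) (w2 η₁ η₂ lam) s)) := by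
    apply tendsto_int ht.2 (C := Real.exp 2)
    · exact fun n => gf_cont (hok n).1 (hok n).2.1
    · intro n s hs
      have hs' : s ∈ Set.Icc (0:ℝ) 1 := ⟨ht.1.trans hs.1, hs.2⟩
      rw [abs_of_nonneg (gf_nonneg _ _ _)]
      exact gf_le (hok n) hs'
    · exact fun s hs => glim s ⟨ht.1.trans hs.1, hs.2⟩
  have hit : ∀ n : ℕ, it η₁ η₂ lam (n+1)
      = (stepU η₁ η₂ lam (it η₁ η₂ lam n).1 (it η₁ η₂ lam n).2,
         stepV η₂ lam (it η₁ η₂ lam n).1 (it η₁ η₂ lam n).2) := fun n => rfl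
  have hs1 : Tendsto (fun n => (it η₁ η₂ lam (n+1)).1 t) atTop
      (𝓝 (stepU η₁ η₂ lam (w1 η₁ η₂ lam) (w2 η₁ η₂ lam) t)) := by
    simp only [hit]
    unfold stepU
    exact ((Tendsto.const_mul η₁ (hA14.add (hB34.pow 2))).add
      ((Tendsto.const_mul η₂ hH).mul_const t)).add
      (Tendsto.const_mul lam (hI1.add (Tendsto.const_mul t hI2)))
  have hs2 : Tendsto (fun n => (it η₁ η₂ lam (n+1)).2 t) atTop
      (𝓝 (stepV η₂ lam (w1 η₁ η₂ lam) (w2 η₁ η₂ lam) t)) := by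
    simp only [hit]
    unfold stepV
    exact (Tendsto.const_mul η₂ hH).add (Tendsto.const_mul lam hI2)
  have hl1 : Tendsto (fun n => (it η₁ η₂ lam (n+1)).1 t) atTop (𝓝 (w1 η₁ η₂ lam t)) :=
    (tw1 t ht).comp (tendsto_add_atTop_nat 1)
  have hl2 : Tendsto (fun n => (it η₁ η₂ lam (n+1)).2 t) atTop (𝓝 (w2 η₁ η₂ lam t)) :=
    (tw2 t ht).comp (tendsto_add_atTop_nat 1)
  exact ⟨tendsto_nhds_unique hl1 hs1, tendsto_nhds_unique hl2 hs2⟩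

end Key

end Ex31

/-- Example 3.1 in the paper: for parameters with
`max {λe²/2 + 2η₁ + 2η₂, λe² + 2η₂} ≤ 1` and `λ ≥ 1/10`, the BVP
`u'' + λ e^{t(u+u')} = 0`, `u(0) = η₁(u(1/4) + u'(3/4)²)`, `u'(1) = η₂ ∫₀¹ (u³ + u')`
has a non-negative non-decreasing solution `u` with `1/20 ≤ ‖u‖ ≤ 1`. -/
theorem example_existence
    (η₁ η₂ lam : ℝ) (hη₁ : 0 ≤ η₁) (hη₂ : 0 ≤ η₂)
    (hmax : max (lam * (Real.exp 2 / 2) + 2 * η₁ + 2 * η₂)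
      (lam * Real.exp 2 + 2 * η₂) ≤ 1)
    (hlam : 1/10 ≤ lam) :
    ∃ p ∈ coneP, ∃ u'' : ℝ → ℝ,
      ContinuousOn u'' I01 ∧
      (∀ t ∈ I01, HasDerivWithinAt (ext01 p.2) (u'' t) I01 t) ∧
      (∀ t ∈ I01, u'' t + lam * Real.exp (t * (ext01 p.1 t + ext01 p.2 t)) = 0) ∧
      p.1 ⟨0, by norm_num⟩ =
        η₁ * (p.1 ⟨1/4, by norm_num⟩ + (p.2 ⟨3/4, by norm_num⟩) ^ 2) ∧
      p.2 ⟨1, by norm_num⟩ =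
        η₂ * ∫ s in (0:ℝ)..1, ((ext01 p.1 s) ^ 3 + ext01 p.2 s) ∧
      1/20 ≤ ‖p‖ ∧ ‖p‖ ≤ 1 := by
  have he2 : (0:ℝ) < Real.exp 2 := Real.exp_pos 2
  have hA : 2*η₁ + 2*η₂ + lam * (Real.exp 2/2) ≤ 1 := by
    have := le_trans (le_max_left _ _) hmax; linarith
  have hB : 2*η₂ + lam * Real.exp 2 ≤ 1 := by
    have := le_trans (le_max_right _ _) hmax; linarith
  have hlam0 : (0:ℝ) ≤ lam := by linarith
  set W1 := Ex31.w1 η₁ η₂ lam with hW1def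
  set W2 := Ex31.w2 η₁ η₂ lam with hW2def
  have hok := Ex31.ok_it (η₁ := η₁) (η₂ := η₂) (lam := lam) hη₁ hη₂ hlam0 hA hB
  have weq := Ex31.w_eq (η₁ := η₁) (η₂ := η₂) (lam := lam) hη₁ hη₂ hlam0 hA hB
  rw [← hW1def, ← hW2def] at weq
  have hWmem : ∀ t ∈ Set.Icc (0:ℝ) 1,
      (0 ≤ W1 t ∧ W1 t ≤ 1) ∧ (0 ≤ W2 t ∧ W2 t ≤ 1) := fun t ht =>
    ⟨Ex31.w1_mem hη₁ hη₂ hlam0 hA hB ht, Ex31.w2_mem hη₁ hη₂ hlam0 hA hB ht⟩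
  have hW1m : Measurable W1 := Ex31.w1_measurable _ _ _ fun n => (hok n).1
  have hW2m : Measurable W2 := Ex31.w2_measurable _ _ _ fun n => (hok n).2.1
  set G := Ex31.gf W1 W2 with hGdef
  have hGm : Measurable G := Real.measurable_exp.comp (measurable_id.mul (hW1m.add hW2m))
  have hsGm : Measurable fun s => s * G s := measurable_id.mul hGm
  have hGnn : ∀ s, 0 ≤ G s := Ex31.gf_nonneg W1 W2
  have hGle : ∀ s ∈ Set.Icc (0:ℝ) 1, G s ≤ Real.exp 2 := fun s hs =>
    Ex31.gf_le' hWmem hs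
  have hGint : IntegrableOn G (Set.Icc (0:ℝ) 1) volume := by
    refine Integrable.mono' (g := fun _ => Real.exp 2) ?_
      hGm.aestronglyMeasurable.restrict ?_
    · exact integrableOn_const measure_Icc_lt_top.ne
    · filter_upwards [ae_restrict_mem measurableSet_Icc] with s hs
      rw [Real.norm_eq_abs, abs_of_nonneg (hGnn s)]
      exact hGle s hs
  have hsGint : IntegrableOn (fun s => s * G s) (Set.Icc (0:ℝ) 1) volume := by
    refine Integrable.mono' (g := fun _ => Real.exp 2) ?_
      hsGm.aestronglyMeasurable.restrict ?_
    · exact integrableOn_const measure_Icc_lt_top.ne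
    · filter_upwards [ae_restrict_mem measurableSet_Icc] with s hs
      rw [Real.norm_eq_abs, abs_of_nonneg (mul_nonneg hs.1 (hGnn s))]
      calc s * G s ≤ 1 * Real.exp 2 :=
            mul_le_mul hs.2 (hGle s hs) (hGnn s) zero_le_one
        _ = Real.exp 2 := one_mul _
  have hII : ∀ a b : ℝ, a ≤ b → 0 ≤ a → b ≤ 1 → IntervalIntegrable G volume a b := by
    intro a b hab ha hb
    apply IntegrableOn.intervalIntegrable
    rw [Set.uIcc_of_le hab]
    exact hGint.mono_set (Set.Icc_subset_Icc ha hb)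
  have hsII : ∀ a b : ℝ, a ≤ b → 0 ≤ a → b ≤ 1 →
      IntervalIntegrable (fun s => s * G s) volume a b := by
    intro a b hab ha hb
    apply IntegrableOn.intervalIntegrable
    rw [Set.uIcc_of_le hab]
    exact hsGint.mono_set (Set.Icc_subset_Icc ha hb)
  have hQeq : ∀ x ∈ Set.Icc (0:ℝ) 1, (∫ s in x..(1:ℝ), G s)
      = (∫ s in (0:ℝ)..1, G s) - ∫ s in (0:ℝ)..x, G s := fun x hx =>
    Ex31.int_right_eq (hII 0 x hx.1 le_rfl hx.2) (hII x 1 hx.2 hx.1 le_rfl)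
  have hPc : ContinuousOn (fun x => ∫ s in (0:ℝ)..x, s * G s) (Set.Icc (0:ℝ) 1) := by
    have h := intervalIntegral.continuousOn_primitive_interval (a := (0:ℝ)) (b := 1)
      (μ := volume) (f := fun s => s * G s) (by rw [Set.uIcc_of_le zero_le_one]; exact hsGint)
    rwa [Set.uIcc_of_le zero_le_one] at h
  have hRc : ContinuousOn (fun x => ∫ s in (0:ℝ)..x, G s) (Set.Icc (0:ℝ) 1) := by
    have h := intervalIntegral.continuousOn_primitive_interval (a := (0:ℝ)) (b := 1)
      (μ := volume) (f := G) (by rw [Set.uIcc_of_le zero_le_one]; exact hGint)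
    rwa [Set.uIcc_of_le zero_le_one] at h
  have hQc : ContinuousOn (fun x => ∫ s in x..(1:ℝ), G s) (Set.Icc (0:ℝ) 1) :=
    ContinuousOn.congr (continuousOn_const.sub hRc) hQeq
  have hUc : ContinuousOn (Ex31.stepU η₁ η₂ lam W1 W2) (Set.Icc (0:ℝ) 1) := by
    unfold Ex31.stepU
    exact (continuousOn_const.add (continuousOn_const.mul continuousOn_id)).add
      (continuousOn_const.mul (hPc.add (continuousOn_id.mul hQc)))
  have hVc : ContinuousOn (Ex31.stepV η₂ lam W1 W2) (Set.Icc (0:ℝ) 1) := by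
    unfold Ex31.stepV
    exact continuousOn_const.add (continuousOn_const.mul hQc)
  have hW1c : ContinuousOn W1 (Set.Icc (0:ℝ) 1) :=
    ContinuousOn.congr hUc fun x hx => (weq x hx).1
  have hW2c : ContinuousOn W2 (Set.Icc (0:ℝ) 1) :=
    ContinuousOn.congr hVc fun x hx => (weq x hx).2
  have hGcOn : ContinuousOn G (Set.Icc (0:ℝ) 1) := by
    rw [hGdef]
    unfold Ex31.gf
    exact Real.continuous_exp.comp_continuousOn
      (continuousOn_id.mul (hW1c.add hW2c))
  have hsGcOn : ContinuousOn (fun s => s * G s) (Set.Icc (0:ℝ) 1) :=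
    continuousOn_id.mul hGcOn
  have hder : ∀ t ∈ Set.Icc (0:ℝ) 1,
      HasDerivWithinAt (Ex31.stepU η₁ η₂ lam W1 W2) (Ex31.stepV η₂ lam W1 W2 t)
        (Set.Icc (0:ℝ) 1) t ∧
      HasDerivWithinAt (Ex31.stepV η₂ lam W1 W2) (-(lam * G t)) (Set.Icc (0:ℝ) 1) t := by
    intro t ht
    haveI : Fact (t ∈ Set.Icc (0:ℝ) 1) := ⟨ht⟩
    have hmeas1 : StronglyMeasurableAtFilter (fun s => s * G s)
        (𝓝[Set.Icc (0:ℝ) 1] t) volume :=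
      ⟨Set.univ, Filter.univ_mem, hsGm.aestronglyMeasurable.restrict⟩
    have hmeas2 : StronglyMeasurableAtFilter G (𝓝[Set.Icc (0:ℝ) 1] t) volume :=
      ⟨Set.univ, Filter.univ_mem, hGm.aestronglyMeasurable.restrict⟩
    have hdP : HasDerivWithinAt (fun x => ∫ s in (0:ℝ)..x, s * G s) (t * G t)
        (Set.Icc (0:ℝ) 1) t :=
      intervalIntegral.integral_hasDerivWithinAt_right
        (hsII 0 t ht.1 le_rfl ht.2) hmeas1 (hsGcOn t ht)
    have hdR : HasDerivWithinAt (fun x => ∫ s in (0:ℝ)..x, G s) (G t)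
        (Set.Icc (0:ℝ) 1) t :=
      intervalIntegral.integral_hasDerivWithinAt_right
        (hII 0 t ht.1 le_rfl ht.2) hmeas2 (hGcOn t ht)
    have hdQ : HasDerivWithinAt (fun x => ∫ s in x..(1:ℝ), G s) (-(G t))
        (Set.Icc (0:ℝ) 1) t := by
      have h0 := (hasDerivWithinAt_const t (Set.Icc (0:ℝ) 1)
        (∫ s in (0:ℝ)..1, G s)).sub hdR
      have h1 := h0.congr (fun x hx => hQeq x hx) (hQeq t ht)
      simpa using h1
    constructor
    · have h2 := (hasDerivWithinAt_id t (Set.Icc (0:ℝ) 1)).mul hdQ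
      have h3 : HasDerivWithinAt (Ex31.stepU η₁ η₂ lam W1 W2)
          (0 + η₂ * Ex31.Hf W1 W2 * 1 +
            lam * (t * G t + (1 * (∫ s in t..(1:ℝ), G s) + t * -(G t))))
          (Set.Icc (0:ℝ) 1) t := by
        unfold Ex31.stepU
        exact ((hasDerivWithinAt_const t _ _).add
          (HasDerivWithinAt.const_mul (η₂ * Ex31.Hf W1 W2)
            (hasDerivWithinAt_id t _))).add
          (HasDerivWithinAt.const_mul lam (hdP.add h2))
      have h4 : (0 + η₂ * Ex31.Hf W1 W2 * 1 +
          lam * (t * G t + (1 * (∫ s in t..(1:ℝ), G s) + t * -(G t))))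
          = Ex31.stepV η₂ lam W1 W2 t := by
        unfold Ex31.stepV; ring
      rwa [h4] at h3
    · have h5 : HasDerivWithinAt (Ex31.stepV η₂ lam W1 W2) (0 + lam * -(G t))
          (Set.Icc (0:ℝ) 1) t := by
        unfold Ex31.stepV
        exact (hasDerivWithinAt_const t _ _).add (HasDerivWithinAt.const_mul lam hdQ)
      have h6 : (0 + lam * -(G t)) = -(lam * G t) := by ring
      rwa [h6] at h5
  -- the candidate solution
  set uF := Ex31.stepU η₁ η₂ lam W1 W2 with huF
  set vF := Ex31.stepV η₂ lam W1 W2 with hvF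
  set p1 : C(I01, ℝ) := ⟨I01.restrict uF, hUc.restrict⟩ with hp1
  set p2 : C(I01, ℝ) := ⟨I01.restrict vF, hVc.restrict⟩ with hp2
  have hext1 : ∀ x ∈ I01, ext01 p1 x = uF x := by
    intro x hx
    rw [ext01, Set.IccExtend_of_mem _ _ hx]
    rfl
  have hext2 : ∀ x ∈ I01, ext01 p2 x = vF x := by
    intro x hx
    rw [ext01, Set.IccExtend_of_mem _ _ hx]
    rfl
  refine ⟨(p1, p2), ⟨?_, ?_⟩,
    (fun t => -(lam * Real.exp (t * (uF t + vF t)))), ?_, ?_, ?_, ?_, ?_, ?_, ?_⟩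
  · -- IsC1
    intro t
    exact ((hder t t.2).1).congr (fun y hy => hext1 y hy) (hext1 t t.2)
  · -- nonneg
    intro t
    constructor
    · show (0:ℝ) ≤ uF t
      rw [← (weq t t.2).1]
      exact (hWmem t t.2).1.1
    · show (0:ℝ) ≤ vF t
      rw [← (weq t t.2).2]
      exact (hWmem t t.2).2.1
  · -- continuity of u''
    exact (continuousOn_const.mul (Real.continuous_exp.comp_continuousOn
      (continuousOn_id.mul (hUc.add hVc)))).neg
  · -- derivative of p2
    intro t ht
    have hval : -(lam * G t) = -(lam * Real.exp (t * (uF t + vF t))) := by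
      rw [hGdef]
      unfold Ex31.gf
      rw [(weq t ht).1, (weq t ht).2]
    have := (hder t ht).2
    rw [hval] at this
    exact this.congr (fun y hy => hext2 y hy) (hext2 t ht)
  · -- the ODE
    intro t ht
    rw [hext1 t ht, hext2 t ht]
    ring
  · -- boundary condition at 0
    show uF 0 = η₁ * (uF (1/4) + (vF (3/4))^2)
    rw [← (weq (1/4) (by norm_num)).1, ← (weq (3/4) (by norm_num)).2, huF]
    unfold Ex31.stepU
    simp
  · -- boundary condition at 1
    have hint : (∫ s in (0:ℝ)..1, ((ext01 p1 s)^3 + ext01 p2 s)) = Ex31.Hf W1 W2 := by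
      unfold Ex31.Hf
      apply intervalIntegral.integral_congr
      intro s hs
      rw [Set.uIcc_of_le zero_le_one] at hs
      show ext01 p1 s ^ 3 + ext01 p2 s = W1 s ^ 3 + W2 s
      rw [hext1 s hs, hext2 s hs, ← (weq s hs).1, ← (weq s hs).2]
    show vF 1 = η₂ * ∫ s in (0:ℝ)..1, ((ext01 p1 s)^3 + ext01 p2 s)
    rw [hint, hvF]
    unfold Ex31.stepV
    simp
  · -- lower bound for the norm
    have hHnn : 0 ≤ Ex31.Hf W1 W2 :=
      Ex31.Hf_nonneg fun t ht => ⟨(hWmem t ht).1.1, (hWmem t ht).2.1⟩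
    have hint1 : (1:ℝ) ≤ ∫ s in (0:ℝ)..1, G s := by
      have h := intervalIntegral.integral_mono_on (f := fun _ => (1:ℝ)) (g := G)
        zero_le_one intervalIntegrable_const (hII 0 1 zero_le_one le_rfl le_rfl)
        (fun s hs => by
          rw [hGdef]
          exact Ex31.gf_ge_one (fun t ht => ⟨(hWmem t ht).1.1, (hWmem t ht).2.1⟩) hs)
      simpa using h
    have hv0 : lam ≤ vF 0 := by
      rw [hvF]
      unfold Ex31.stepV
      have k1 : lam * 1 ≤ lam * ∫ s in (0:ℝ)..1, G s :=
        mul_le_mul_of_nonneg_left hint1 hlam0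
      have k2 : 0 ≤ η₂ * Ex31.Hf W1 W2 := mul_nonneg hη₂ hHnn
      rw [hGdef] at k1
      linarith
    have hn1 : (1:ℝ)/10 ≤ ‖p2‖ := by
      have h1 : ‖p2 ⟨0, by norm_num⟩‖ ≤ ‖p2‖ := p2.norm_coe_le_norm _
      have h2 : vF 0 ≤ ‖p2 ⟨0, by norm_num⟩‖ := by
        rw [Real.norm_eq_abs]
        exact le_abs_self _
      linarith
    calc (1:ℝ)/20 ≤ 1/10 := by norm_num
      _ ≤ ‖p2‖ := hn1
      _ ≤ ‖(p1, p2)‖ := norm_snd_le (p1, p2)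
  · -- upper bound for the norm
    rw [norm_prod_le_iff]
    constructor
    · refine (ContinuousMap.norm_le _ zero_le_one).2 fun x => ?_
      rw [Real.norm_eq_abs]
      have : p1 x = uF x := rfl
      rw [this, ← (weq x x.2).1]
      rw [abs_le]
      exact ⟨by linarith [(hWmem x x.2).1.1], (hWmem x x.2).1.2⟩
    · refine (ContinuousMap.norm_le _ zero_le_one).2 fun x => ?_
      rw [Real.norm_eq_abs]
      have : p2 x = vF x := rfl
      rw [this, ← (weq x x.2).2]
      rw [abs_le]
      exact ⟨by linarith [(hWmem x x.2).2.1], (hWmem x x.2).2.2⟩
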